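/- Let Λ : ℕ → ℝ, let m ∈ ℕ, and let v : ℕ → ℂ. Let 𝒞 be the set of triples c = (p,q,l) of finitely supported functions ℕ → ℕ with supp q ∩ supp l = ∅ and |q| + |l| ≤ m (where |q| = Σ_k q_k), and for c ∈ 𝒞 set M_c(v) = ∏_k |v_k|^{2p_k} v_k^{q_k} (conj v_k)^{l_k}. Let (C_c)_{c∈𝒞} be complex numbers with Σ_{c∈𝒞} |C_c| |M_c(v)| < ∞. For t ∈ ℝ let Ψ_{tΛ}v = (e^{itΛ_k} v_k)_k; then M_c(Ψ_{tΛ}v) = e^{it (q−l)·Λ} M_c(v), the series F(t) = Σ_{c∈𝒞} C_c M_c(Ψ_{tΛ}v) converges absolutely for every t, and lim_{T→∞} (1/T) ∫₀^T F(t) dt = Σ_{c∈𝒞, (q−l)·Λ = 0} C_c M_c(v), where (q−l)·Λ = Σ_k (q_k − l_k) Λ_k. -/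

import Mathlib

open scoped BigOperators Classical
open Filter Topology MeasureTheory

lemma aux_prod (t : ℝ) (Λ : ℕ → ℝ) (w : ℕ → ℂ) (q : ℕ →₀ ℕ) :
    (q.prod fun k e => (Complex.exp (Complex.I * Complex.ofReal (t * Λ k)) * w k) ^ e)
    = Complex.exp (Complex.I * Complex.ofReal (t * q.sum fun k e => (e : ℝ) * Λ k))
      * q.prod fun k e => (w k) ^ e := by
  classical
  rw [Finsupp.prod, Finsupp.prod, Finsupp.sum]
  simp_rw [mul_pow]
  rw [Finset.prod_mul_distrib]
  congr 1
  simp_rw [← Complex.exp_nat_mul, ← Complex.exp_sum]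
  congr 1
  push_cast [Finset.mul_sum]
  refine Finset.sum_congr rfl fun k _ => by ring

lemma aux_key (t : ℝ) (Λ : ℕ → ℝ) (v : ℕ → ℂ)
    (p q l : ℕ →₀ ℕ) :
    ((p.prod fun k e => ((‖Complex.exp (Complex.I * Complex.ofReal (t * Λ k)) * v k‖ : ℝ) : ℂ) ^ (2 * e)) *
        (q.prod fun k e => (Complex.exp (Complex.I * Complex.ofReal (t * Λ k)) * v k) ^ e) *
        (l.prod fun k e => (starRingEnd ℂ (Complex.exp (Complex.I * Complex.ofReal (t * Λ k)) * v k)) ^ e))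
    = Complex.exp (Complex.I * Complex.ofReal (t *
        ((q.sum fun k e => (e : ℝ) * Λ k) - (l.sum fun k e => (e : ℝ) * Λ k)))) *
      ((p.prod fun k e => ((‖v k‖ : ℝ) : ℂ) ^ (2 * e)) *
        (q.prod fun k e => (v k) ^ e) *
        (l.prod fun k e => (starRingEnd ℂ (v k)) ^ e)) := by
  classical
  have habs : ∀ k : ℕ, ‖Complex.exp (Complex.I * Complex.ofReal (t * Λ k)) * v k‖
      = ‖v k‖ := by
    intro k
    rw [norm_mul, mul_comm Complex.I, Complex.norm_exp_ofReal_mul_I, one_mul]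
  have hp : (p.prod fun k e => ((‖Complex.exp (Complex.I * Complex.ofReal (t * Λ k)) * v k‖ : ℝ) : ℂ) ^ (2 * e))
      = p.prod fun k e => ((‖v k‖ : ℝ) : ℂ) ^ (2 * e) :=
    Finsupp.prod_congr fun k _ => by rw [habs]
  have hl0 : (l.prod fun k e => (starRingEnd ℂ (Complex.exp (Complex.I * Complex.ofReal (t * Λ k)) * v k)) ^ e)
      = l.prod fun k e => (Complex.exp (Complex.I * Complex.ofReal (t * (-Λ) k)) * (starRingEnd ℂ (v k))) ^ e := by
    refine Finsupp.prod_congr fun k _ => ?_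
    congr 1
    rw [map_mul, ← Complex.exp_conj]
    congr 2
    simp [mul_neg]
  rw [hp, hl0, aux_prod t Λ v q, aux_prod t (-Λ) (fun k => starRingEnd ℂ (v k)) l]
  have hlsum : (l.sum fun k e => (e : ℝ) * (-Λ) k) = -(l.sum fun k e => (e : ℝ) * Λ k) := by
    simp [Finsupp.sum, mul_neg]
  rw [hlsum]
  have hmerge : Complex.exp (Complex.I * Complex.ofReal (t * Finsupp.sum q fun k e => (e:ℝ) * Λ k))
      * Complex.exp (Complex.I * Complex.ofReal (t * -Finsupp.sum l fun k e => (e:ℝ) * Λ k))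
      = Complex.exp (Complex.I * Complex.ofReal (t * ((Finsupp.sum q fun k e => (e:ℝ) * Λ k) - Finsupp.sum l fun k e => (e:ℝ) * Λ k))) := by
    rw [← Complex.exp_add]; congr 1; push_cast; ring
  rw [← hmerge]; ring

theorem statement19 (Λ : ℕ → ℝ) (m : ℕ) (v : ℕ → ℂ)
    (C : Set ((ℕ →₀ ℕ) × (ℕ →₀ ℕ) × (ℕ →₀ ℕ)))
    (hC : C = {c | Disjoint c.2.1.support c.2.2.support ∧
        (c.2.1.sum fun _ e => e) + (c.2.2.sum fun _ e => e) ≤ m})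
    (M : ((ℕ →₀ ℕ) × (ℕ →₀ ℕ) × (ℕ →₀ ℕ)) → (ℕ → ℂ) → ℂ)
    (hM : ∀ c w, M c w =
        (c.1.prod fun k e => ((‖w k‖ : ℝ) : ℂ) ^ (2 * e)) *
        (c.2.1.prod fun k e => (w k) ^ e) *
        (c.2.2.prod fun k e => (starRingEnd ℂ (w k)) ^ e))
    (coef : C → ℂ)
    (hsum : Summable fun c : C => ‖coef c‖ * ‖M c.1 v‖)
    (Ψ : ℝ → (ℕ → ℂ) → (ℕ → ℂ))
    (hΨ : ∀ (t : ℝ) (w : ℕ → ℂ) (k : ℕ),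
        Ψ t w k = Complex.exp (Complex.I * Complex.ofReal (t * Λ k)) * w k)
    (dotΛ : ((ℕ →₀ ℕ) × (ℕ →₀ ℕ) × (ℕ →₀ ℕ)) → ℝ)
    (hdot : ∀ c, dotΛ c =
        (c.2.1.sum fun k e => (e : ℝ) * Λ k) - (c.2.2.sum fun k e => (e : ℝ) * Λ k)) :
    (∀ (t : ℝ) (c : C),
        M c.1 (Ψ t v) = Complex.exp (Complex.I * Complex.ofReal (t * dotΛ c.1)) * M c.1 v) ∧
    (∀ t : ℝ, Summable fun c : C => ‖coef c * M c.1 (Ψ t v)‖) ∧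
    Tendsto (fun T : ℝ => (1 / T : ℂ) * ∫ t in (0:ℝ)..T, ∑' c : C, coef c * M c.1 (Ψ t v))
      atTop (𝓝 (∑' c : C, if dotΛ c.1 = 0 then coef c * M c.1 v else 0)) := by
  classical
  have key : ∀ (t : ℝ) (c : C),
      M c.1 (Ψ t v) = Complex.exp (Complex.I * Complex.ofReal (t * dotΛ c.1)) * M c.1 v := by
    intro t c
    rw [hM, hM, hdot]
    simp_rw [hΨ t v]
    exact aux_key t Λ v c.1.1 c.1.2.1 c.1.2.2
  have habs1 : ∀ (x : ℝ), ‖Complex.exp (Complex.I * (x : ℂ))‖ = 1 := by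
    intro x; rw [mul_comm, Complex.norm_exp_ofReal_mul_I]
  -- notation
  set G : C → ℂ := fun c => coef c * M c.1 v with hG
  have hGsum : Summable fun c : C => ‖G c‖ := by
    simpa only [hG, norm_mul] using hsum
  have hnorm : ∀ (t : ℝ) (c : C), ‖coef c * M c.1 (Ψ t v)‖ = ‖G c‖ := by
    intro t c
    rw [key t c, hG]
    simp only [norm_mul, habs1, one_mul]
  have hsum' : ∀ t : ℝ, Summable fun c : C => ‖coef c * M c.1 (Ψ t v)‖ := by
    intro t
    simpa only [hnorm t] using hGsum
  refine ⟨key, hsum', ?_⟩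
  -- the averaging factor
  set g : ℝ → C → ℂ := fun T c =>
    (1 / T : ℂ) * ∫ t in (0:ℝ)..T, Complex.exp (Complex.I * ((t * dotΛ c.1 : ℝ) : ℂ)) with hg
  -- Step A : eventual identification of the average with a tsum
  have stepA : ∀ᶠ T in atTop, (fun T : ℝ => ∑' c : C, g T c * G c) T
      = (1 / T : ℂ) * ∫ t in (0:ℝ)..T, ∑' c : C, coef c * M c.1 (Ψ t v) := by
    filter_upwards [eventually_gt_atTop (0:ℝ)] with T hT
    have hFt : ∀ t : ℝ, (∑' c : C, coef c * M c.1 (Ψ t v))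
        = ∑' c : C, Complex.exp (Complex.I * ((t * dotΛ c.1 : ℝ) : ℂ)) * G c := by
      intro t
      refine tsum_congr fun c => ?_
      rw [key t c, hG]; ring
    have hcont : ∀ c : C, Continuous fun t : ℝ =>
        Complex.exp (Complex.I * ((t * dotΛ c.1 : ℝ) : ℂ)) * G c := by
      intro c; fun_prop
    have hint : ∀ c : C, IntegrableOn
        (fun t : ℝ => Complex.exp (Complex.I * ((t * dotΛ c.1 : ℝ) : ℂ)) * G c)
        (Set.Ioc (0:ℝ) T) := by
      intro c
      exact (hcont c).integrableOn_Ioc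
    have hnormint : ∀ c : C,
        (∫ t in Set.Ioc (0:ℝ) T, ‖Complex.exp (Complex.I * ((t * dotΛ c.1 : ℝ) : ℂ)) * G c‖)
        = T * ‖G c‖ := by
      intro c
      have : ∀ t : ℝ, ‖Complex.exp (Complex.I * ((t * dotΛ c.1 : ℝ) : ℂ)) * G c‖ = ‖G c‖ := by
        intro t
        rw [norm_mul, habs1, one_mul]
      simp only [this]
      rw [setIntegral_const, Real.volume_real_Ioc_of_le hT.le, smul_eq_mul, sub_zero]
    have hswap : (∫ t in (0:ℝ)..T, ∑' c : C, coef c * M c.1 (Ψ t v))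
        = ∑' c : C, ∫ t in (0:ℝ)..T, Complex.exp (Complex.I * ((t * dotΛ c.1 : ℝ) : ℂ)) * G c := by
      simp only [hFt]
      rw [intervalIntegral.integral_of_le hT.le]
      rw [← MeasureTheory.integral_tsum_of_summable_integral_norm hint ?_]
      · exact tsum_congr fun c => (intervalIntegral.integral_of_le hT.le).symm
      · simp only [hnormint]
        exact hGsum.mul_left T
    rw [hswap, ← tsum_mul_left]
    refine tsum_congr fun c => ?_
    rw [hg, intervalIntegral.integral_mul_const]
    ring
  -- Step B : dominated convergence for the tsum
  have stepB : Tendsto (fun T : ℝ => ∑' c : C, g T c * G c) atTop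
      (𝓝 (∑' c : C, if dotΛ c.1 = 0 then coef c * M c.1 v else 0)) := by
    refine tendsto_tsum_of_dominated_convergence hGsum ?_ ?_
    · intro c
      by_cases hzero : dotΛ c.1 = 0
      · rw [if_pos hzero]
        refine Tendsto.congr' ?_ tendsto_const_nhds
        filter_upwards [eventually_gt_atTop (0:ℝ)] with T hT
        have hT0 : (T:ℂ) ≠ 0 := by exact_mod_cast hT.ne'
        rw [hg]
        simp only [hzero, mul_zero, Complex.ofReal_zero, Complex.exp_zero,
          intervalIntegral.integral_const, sub_zero, Complex.real_smul,
          Complex.ofReal_one, mul_one]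
        field_simp
        rfl
      · rw [if_neg hzero]
        have hlam : (Complex.I * (dotΛ c.1 : ℂ)) ≠ 0 := by
          simp [Complex.I_ne_zero, hzero]
        have hval : ∀ T : ℝ, g T c = (1 / T : ℂ) *
            ((Complex.exp (Complex.I * (dotΛ c.1 : ℂ) * T) - 1) / (Complex.I * (dotΛ c.1 : ℂ))) := by
          intro T
          rw [hg]
          congr 1
          have : ∀ t : ℝ, Complex.I * ((t * dotΛ c.1 : ℝ) : ℂ)
              = (Complex.I * (dotΛ c.1 : ℂ)) * (t : ℂ) := by
            intro t; push_cast; ring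
          simp only [this]
          rw [integral_exp_mul_complex hlam]
          norm_num
        have hb : ∀ᶠ T in atTop, ‖g T c * G c‖ ≤ (2 / ‖Complex.I * (dotΛ c.1 : ℂ)‖ * ‖G c‖) * (1 / T) := by
          filter_upwards [eventually_gt_atTop (0:ℝ)] with T hT
          have h1T : ‖(1 / T : ℂ)‖ = 1 / T := by
            rw [one_div, one_div, norm_inv, Complex.norm_real, Real.norm_of_nonneg hT.le]
          rw [hval T, norm_mul, norm_mul, h1T, norm_div]
          have h2 : ‖Complex.exp (Complex.I * (dotΛ c.1 : ℂ) * T) - 1‖ ≤ 2 := by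
            refine (norm_sub_le _ _).trans ?_
            have : Complex.I * (dotΛ c.1 : ℂ) * T = Complex.I * ((dotΛ c.1 * T : ℝ) : ℂ) := by
              push_cast; ring
            rw [this, norm_one, habs1]
            norm_num
          have hpos : (0:ℝ) < ‖Complex.I * (dotΛ c.1 : ℂ)‖ := by
            simpa using (norm_pos_iff.mpr hlam)
          calc 1 / T * (‖Complex.exp (Complex.I * (dotΛ c.1:ℂ) * T) - 1‖ / ‖Complex.I * (dotΛ c.1:ℂ)‖) * ‖G c‖
              ≤ 1 / T * (2 / ‖Complex.I * (dotΛ c.1:ℂ)‖) * ‖G c‖ := by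
                gcongr
            _ = (2 / ‖Complex.I * (dotΛ c.1:ℂ)‖ * ‖G c‖) * (1 / T) := by ring
        have hlim : Tendsto (fun T : ℝ => (2 / ‖Complex.I * (dotΛ c.1 : ℂ)‖ * ‖G c‖) * (1 / T)) atTop (𝓝 0) := by
          simpa using tendsto_inv_atTop_zero.const_mul
            (2 / ‖Complex.I * (dotΛ c.1 : ℂ)‖ * ‖G c‖)
        exact squeeze_zero_norm' hb hlim
    · filter_upwards [eventually_gt_atTop (0:ℝ)] with T hT c
      rw [norm_mul]
      have hgb : ‖g T c‖ ≤ 1 := by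
        rw [hg, norm_mul]
        have h1T : ‖(1 / T : ℂ)‖ = 1 / T := by
          rw [one_div, one_div, norm_inv, Complex.norm_real, Real.norm_of_nonneg hT.le]
        have hib : ‖∫ t in (0:ℝ)..T, Complex.exp (Complex.I * ((t * dotΛ c.1 : ℝ) : ℂ))‖ ≤ 1 * |T - 0| := by
          refine intervalIntegral.norm_integral_le_of_norm_le_const fun t _ => ?_
          rw [habs1]
        rw [h1T]
        calc 1 / T * ‖∫ t in (0:ℝ)..T, Complex.exp (Complex.I * ((t * dotΛ c.1 : ℝ) : ℂ))‖
            ≤ 1 / T * (1 * |T - 0|) := by gcongr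
          _ = 1 := by rw [sub_zero, abs_of_pos hT]; field_simp
      calc ‖g T c‖ * ‖G c‖ ≤ 1 * ‖G c‖ := by gcongr
        _ = ‖G c‖ := one_mul _
  exact Tendsto.congr' stepA stepB
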